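/- arXiv:2012.04419 — 6 statements merged into one kernel-verified Lean document; each statement's English description precedes it below -/
import Mathlib

section
/- Let f : ℝ^n × ℝ^L → ℝ be jointly continuous, U ⊆ ℝ^L closed and convex with nonempty relative interior, X ⊆ ℝ^n compact, and suppose f is bounded on X × U. Define x ∈ X to be robustly optimal (RO) if it minimizes sup_{z∈U} f(x,z) over X, and Pareto robustly optimal (PRO) if it is RO and there is no RO solution x̄ with f(x̄,z) ≤ f(x,z) for all z ∈ U and strict inequality for some z ∈ U. If the set of RO solutions is nonempty, then a PRO solution exists. -/
/-- `x` is robustly optimal for `min_{x ∈ X} sup_{z ∈ U} f x z`. -/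
def IsRO {n L : ℕ} (f : (Fin n → ℝ) → (Fin L → ℝ) → ℝ)
    (X : Set (Fin n → ℝ)) (U : Set (Fin L → ℝ)) (x : Fin n → ℝ) : Prop :=
  x ∈ X ∧ ∀ x' ∈ X, (⨆ z : U, f x z) ≤ (⨆ z : U, f x' z)

/-- `x` is Pareto robustly optimal: it is RO and no RO solution weakly dominates
it on all of `U` with a strict improvement somewhere. -/
def IsPRO {n L : ℕ} (f : (Fin n → ℝ) → (Fin L → ℝ) → ℝ)
    (X : Set (Fin n → ℝ)) (U : Set (Fin L → ℝ)) (x : Fin n → ℝ) : Prop :=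
  IsRO f X U x ∧
    ¬ ∃ xbar, IsRO f X U xbar ∧ (∀ z ∈ U, f xbar z ≤ f x z) ∧
      ∃ z ∈ U, f xbar z < f x z

/-- Existence of Pareto robustly optimal solutions: `f` jointly continuous,
`U` closed convex with nonempty relative interior, `X` compact, `f` bounded on
`X × U`; if an RO solution exists then a PRO solution exists. -/
theorem stmt3 {n L : ℕ}
    (f : (Fin n → ℝ) → (Fin L → ℝ) → ℝ)
    (hf : Continuous fun p : (Fin n → ℝ) × (Fin L → ℝ) => f p.1 p.2)
    (U : Set (Fin L → ℝ)) (hUclosed : IsClosed U) (hUconv : Convex ℝ U)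
    (hri : (intrinsicInterior ℝ U).Nonempty)
    (X : Set (Fin n → ℝ)) (hX : IsCompact X)
    (M : ℝ) (hbdd : ∀ x ∈ X, ∀ z ∈ U, |f x z| ≤ M)
    (hRO : ∃ x, IsRO f X U x) :
    ∃ x, IsPRO f X U x := by
  classical
  obtain ⟨u0, hu0ri⟩ := hri
  have hu0 : u0 ∈ U := intrinsicInterior_subset hu0ri
  haveI : Nonempty U := ⟨⟨u0, hu0⟩⟩
  obtain ⟨x0, hx0⟩ := hRO
  have hx0X : x0 ∈ X := hx0.1
  have hM : 0 ≤ M := le_trans (abs_nonneg _) (hbdd x0 hx0X u0 hu0)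
  set F : (Fin n → ℝ) → ℝ := fun x => ⨆ zz : U, f x zz with hF
  have hbdda : ∀ x ∈ X, BddAbove (Set.range fun zz : U => f x zz) := by
    intro x hx
    exact ⟨M, by rintro _ ⟨zz, rfl⟩; exact (abs_le.mp (hbdd x hx zz zz.2)).2⟩
  have hROiff : ∀ x ∈ X,
      ((∀ x' ∈ X, F x ≤ F x') ↔ ∀ x' ∈ X, ∀ zz ∈ U, f x zz ≤ F x') := by
    intro x hx
    constructor
    · intro h x' hx' zz hzz
      exact le_trans (le_ciSup (hbdda x hx) ⟨zz, hzz⟩) (h x' hx')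
    · intro h x' hx'
      exact ciSup_le fun zz => h x' hx' zz zz.2
  haveI : CompactSpace X := isCompact_iff_compactSpace.mp hX
  set z : ℕ → U := TopologicalSpace.denseSeq U with hzdef
  have hz : DenseRange z := TopologicalSpace.denseRange_denseSeq U
  have hslice : ∀ (zz : Fin L → ℝ), Continuous fun x : X => f ↑x zz := fun zz =>
    hf.comp (Continuous.prodMk continuous_subtype_val continuous_const)
  set S : Set X := {p : X | ∀ x' ∈ X, ∀ zz ∈ U, f ↑p zz ≤ F x'} with hSdef
  have hSclosed : IsClosed S := by
    have : S = ⋂ x' ∈ X, ⋂ zz ∈ U, {p : X | f ↑p zz ≤ F x'} := by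
      ext p; simp [hSdef, Set.mem_iInter]
    rw [this]
    exact isClosed_biInter fun x' _ => isClosed_biInter fun zz _ =>
      isClosed_le (hslice zz) continuous_const
  have hSmem : ∀ p : X, p ∈ S ↔ IsRO f X U ↑p := by
    intro p
    unfold IsRO
    constructor
    · intro h; exact ⟨p.2, (hROiff ↑p p.2).mpr h⟩
    · intro h; exact (hROiff ↑p p.2).mp h.2
  have hSne : S.Nonempty := ⟨⟨x0, hx0X⟩, (hSmem _).mpr hx0⟩
  have hScompact : IsCompact S := hSclosed.isCompact
  have hbound : ∀ (p : X) (k : ℕ),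
      ‖(1/2 : ℝ)^k * f ↑p (z k)‖ ≤ (1/2 : ℝ)^k * M := by
    intro p k
    have h1 : ‖(1/2 : ℝ)^k * f ↑p (z k)‖ = (1/2 : ℝ)^k * |f ↑p (z k)| := by
      rw [norm_mul, Real.norm_eq_abs, Real.norm_eq_abs, abs_pow,
        abs_of_nonneg (by norm_num : (0:ℝ) ≤ 1/2)]
    rw [h1]
    exact mul_le_mul_of_nonneg_left (hbdd ↑p p.2 (z k) (z k).2) (by positivity)
  have hMsum : Summable fun k : ℕ => (1/2 : ℝ)^k * M :=
    summable_geometric_two.mul_right M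
  have hsummable : ∀ p : X, Summable fun k : ℕ => (1/2 : ℝ)^k * f ↑p (z k) := by
    intro p
    exact Summable.of_norm_bounded hMsum (hbound p)
  set g : X → ℝ := fun p => ∑' k : ℕ, (1/2 : ℝ)^k * f ↑p (z k) with hgdef
  have hgcont : Continuous g :=
    continuous_tsum (fun k => continuous_const.mul (hslice (z k))) hMsum
      (fun k p => hbound p k)
  obtain ⟨p₀, hp₀S, hmin⟩ := hScompact.exists_isMinOn hSne hgcont.continuousOn
  refine ⟨↑p₀, (hSmem p₀).mp hp₀S, ?_⟩
  rintro ⟨xbar, hbar, hle, z₀, hz₀, hlt⟩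
  set pbar : X := ⟨xbar, hbar.1⟩ with hpbar
  have hpbarS : pbar ∈ S := (hSmem pbar).mpr hbar
  have hge : g p₀ ≤ g pbar := hmin hpbarS
  -- find a dense-sequence point where strict inequality holds
  have hVopen : IsOpen {u : U | f xbar ↑u < f ↑p₀ ↑u} := by
    apply isOpen_lt
    · exact hf.comp (Continuous.prodMk continuous_const continuous_subtype_val)
    · exact hf.comp (Continuous.prodMk continuous_const continuous_subtype_val)
  have hVne : ({u : U | f xbar ↑u < f ↑p₀ ↑u}).Nonempty := ⟨⟨z₀, hz₀⟩, hlt⟩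
  obtain ⟨k, hk⟩ := hz.exists_mem_open hVopen hVne
  have hterm : ∀ i : ℕ, (1/2 : ℝ)^i * f xbar (z i) ≤ (1/2 : ℝ)^i * f ↑p₀ (z i) :=
    fun i => mul_le_mul_of_nonneg_left (hle (z i) (z i).2) (by positivity)
  have hstrict : (1/2 : ℝ)^k * f xbar (z k) < (1/2 : ℝ)^k * f ↑p₀ (z k) :=
    mul_lt_mul_of_pos_left hk (by positivity)
  have hglt : g pbar < g p₀ :=
    Summable.tsum_lt_tsum hterm hstrict (hsummable pbar) (hsummable p₀)
  exact absurd hge (not_le.mpr hglt)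
end

section
/- Let f : ℝ^n × ℝ^L → ℝ with f(x,·) continuous for each x, U ⊆ ℝ^L closed and convex with nonempty relative interior, and X ⊆ ℝ^n a finite set. Define RO and PRO solutions as before for the problem min_{x∈X} sup_{z∈U} f(x,z). If an RO solution exists, then a PRO solution exists. -/
/-- Existence of Pareto robustly optimal solutions with a finite feasible set:
`f(x,·)` continuous for each `x`, `U` closed convex with nonempty relative
interior, `X` finite; if an RO solution exists then a PRO solution exists. -/
theorem stmt4 {n L : ℕ}
    (f : (Fin n → ℝ) → (Fin L → ℝ) → ℝ)
    (hf : ∀ x, Continuous (f x))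
    (U : Set (Fin L → ℝ)) (hUclosed : IsClosed U) (hUconv : Convex ℝ U)
    (hri : (intrinsicInterior ℝ U).Nonempty)
    (X : Set (Fin n → ℝ)) (hX : X.Finite)
    (hRO : ∃ x, IsRO f X U x) :
    ∃ x, IsPRO f X U x := by
  obtain ⟨x0, hx0⟩ := hRO
  have hSfin : {x | IsRO f X U x}.Finite := hX.subset fun x hx => hx.1
  obtain ⟨a, haS, hmin⟩ := Set.Finite.exists_minimalFor
    (fun x => (fun z : U => f x z)) {x | IsRO f X U x} hSfin ⟨x0, hx0⟩
  refine ⟨a, haS, ?_⟩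
  rintro ⟨xbar, hbar, hle, z, hz, hlt⟩
  have hge : (fun z : U => f xbar z) ≤ fun z : U => f a z := fun zu => hle zu zu.2
  have heq := hmin hbar hge
  have : f a z ≤ f xbar z := heq ⟨z, hz⟩
  linarith
end

section
/- Consider a parametric linear program min { dᵀy : B y ≤ b(z) } where b(z) ∈ ℝ^m is affine in z, and suppose the LP is feasible and bounded for all z ∈ U ⊆ ℝ^L. Then there exist finitely many sets U_1, …, U_β covering U, each of the form U_i = { z ∈ U : W_i^{-1} b(z) ≥ 0 } for an invertible matrix W_i ∈ ℝ^{m×m}, and finitely many affine maps y_i(z) such that for all z ∈ U_i, y_i(z) is an optimal solution. Consequently, the rule y(z) = y_{i*(z)}(z) with i*(z) = min{ i : z ∈ U_i } is an optimal decision rule that is piecewise linear (region-wise affine) in z. -/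
set_option linter.unusedSectionVars false

open Matrix

namespace Stmt8Aux

variable {m : ℕ} {ι : Type*} [Fintype ι] [DecidableEq ι]

/-- The basis matrix: columns `g` of `A`. -/
def Wb (A : Matrix (Fin m) ι ℝ) (g : Fin m → ι) : Matrix (Fin m) (Fin m) ℝ :=
  A.submatrix id g

@[simp] lemma Wb_apply (A : Matrix (Fin m) ι ℝ) (g : Fin m → ι) (i k : Fin m) :
    Wb A g i k = A i (g k) := rfl

/-- Spread a basic vector `w : Fin m → ℝ` over all coordinates via `g`. -/
def expand (g : Fin m → ι) (w : Fin m → ℝ) : ι → ℝ :=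
  fun j => ∑ i, if g i = j then w i else 0

lemma mulVec_expand (A : Matrix (Fin m) ι ℝ) (g : Fin m → ι) (w : Fin m → ℝ) :
    A.mulVec (expand g w) = (Wb A g).mulVec w := by
  funext i
  simp only [mulVec, dotProduct, expand, Wb_apply, Finset.mul_sum]
  rw [Finset.sum_comm]
  refine Finset.sum_congr rfl fun k _ => ?_
  rw [Finset.sum_eq_single (g k)]
  · simp
  · intro j _ hj; simp [Ne.symm hj]
  · simp

lemma expand_nonneg {g : Fin m → ι} {w : Fin m → ℝ} (hw : ∀ i, 0 ≤ w i) (j : ι) :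
    0 ≤ expand g w j := by
  refine Finset.sum_nonneg fun i _ => ?_
  split <;> simp [hw i]

lemma dot_expand (c : ι → ℝ) (g : Fin m → ι) (w : Fin m → ℝ) :
    c ⬝ᵥ expand g w = (c ∘ g) ⬝ᵥ w := by
  simp only [dotProduct, expand, Function.comp, Finset.mul_sum]
  rw [Finset.sum_comm]
  refine Finset.sum_congr rfl fun k _ => ?_
  rw [Finset.sum_eq_single (g k)]
  · simp
  · intro j _ hj; simp [Ne.symm hj]
  · simp

lemma expand_eq_zero {g : Fin m → ι} {w : Fin m → ℝ} {j : ι} (h : ∀ i, g i = j → w i = 0) :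
    expand g w j = 0 := by
  refine Finset.sum_eq_zero fun i _ => ?_
  by_cases h' : g i = j
  · simp [h', h i h']
  · simp [h']

lemma expand_apply_of_injective {g : Fin m → ι} (hg : Function.Injective g) (w : Fin m → ℝ)
    (k : Fin m) : expand g w (g k) = w k := by
  rw [expand, Finset.sum_eq_single k]
  · simp
  · intro i _ hik; simp only [ite_eq_right_iff]; intro h; exact absurd (hg h) hik
  · simp

lemma injective_of_det_ne_zero {A : Matrix (Fin m) ι ℝ} {g : Fin m → ι}
    (h : (Wb A g).det ≠ 0) : Function.Injective g := by
  intro a b hab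
  by_contra hne
  exact h (Matrix.det_zero_of_column_eq hne (fun k => by simp [hab]))


section WithA
variable (A : Matrix (Fin m) ι ℝ)

/-- Feasibility of `x` for right-hand side `v` in standard form. -/
def IsFeas (v : Fin m → ℝ) (x : ι → ℝ) : Prop :=
  (∀ j, 0 ≤ x j) ∧ A.mulVec x = v

/-- Basic solution of basis `g` for rhs `v`. -/
noncomputable def basicSol (g : Fin m → ι) (v : Fin m → ℝ) : ι → ℝ :=
  expand g ((Wb A g)⁻¹.mulVec v)

lemma mulVec_basicSol {g : Fin m → ι} (hg : (Wb A g).det ≠ 0) (v : Fin m → ℝ) :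
    A.mulVec (basicSol A g v) = v := by
  rw [basicSol, mulVec_expand, mulVec_mulVec, mul_nonsing_inv _ (isUnit_iff_ne_zero.2 hg),
    one_mulVec]

lemma eq_expand_comp {g : Fin m → ι} (hinj : Function.Injective g) {x : ι → ℝ}
    (hsupp : ∀ j, x j ≠ 0 → j ∈ Set.range g) : x = expand g (x ∘ g) := by
  funext j
  by_cases hj : j ∈ Set.range g
  · obtain ⟨k, rfl⟩ := hj
    rw [expand_apply_of_injective hinj]
    rfl
  · rw [expand_eq_zero (fun i hi => absurd ⟨i, hi⟩ hj)]
    by_contra h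
    exact hj (hsupp j h)

/-- Uniqueness: a feasible point supported on an invertible basis is the basic solution. -/
lemma comp_eq_inv_mulVec {g : Fin m → ι} (hg : (Wb A g).det ≠ 0) {v : Fin m → ℝ} {x : ι → ℝ}
    (hsupp : ∀ j, x j ≠ 0 → j ∈ Set.range g) (hx : A.mulVec x = v) :
    x ∘ g = (Wb A g)⁻¹.mulVec v ∧ x = basicSol A g v := by
  have hinj := injective_of_det_ne_zero hg
  have hxe : x = expand g (x ∘ g) := eq_expand_comp hinj hsupp
  have hW : (Wb A g).mulVec (x ∘ g) = v := by
    rw [← mulVec_expand, ← hxe, hx]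
  have h1 : x ∘ g = (Wb A g)⁻¹.mulVec v := by
    rw [← hW, mulVec_mulVec, nonsing_inv_mul _ (isUnit_iff_ne_zero.2 hg), one_mulVec]
  exact ⟨h1, by rw [hxe, h1]; rfl⟩

variable (c : ι → ℝ)

/-- Reduced cost vector of basis `g`. -/
noncomputable def redCost (g : Fin m → ι) : ι → ℝ :=
  fun j => c j - (vecMul (c ∘ g) (Wb A g)⁻¹) ⬝ᵥ (fun i => A i j)

/-- A basis which is invertible and dual feasible. -/
def GoodBasis (g : Fin m → ι) : Prop :=
  (Wb A g).det ≠ 0 ∧ ∀ j, 0 ≤ redCost A c g j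

lemma redCost_comp_basis {g : Fin m → ι} (hg : (Wb A g).det ≠ 0) (k : Fin m) :
    redCost A c g (g k) = 0 := by
  have h : (vecMul (c ∘ g) (Wb A g)⁻¹) ⬝ᵥ (fun i => A i (g k))
      = vecMul (vecMul (c ∘ g) (Wb A g)⁻¹) (Wb A g) k := by
    simp [vecMul, dotProduct, Wb]
  rw [redCost, h, vecMul_vecMul, nonsing_inv_mul _ (isUnit_iff_ne_zero.2 hg), vecMul_one]
  simp

/-- Weak duality: a dual feasible basis bounds the cost of any feasible point. -/
lemma good_basis_le {g : Fin m → ι} (hgood : GoodBasis A c g) {v : Fin m → ℝ} {x : ι → ℝ}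
    (hx : IsFeas A v x) :
    (c ∘ g) ⬝ᵥ ((Wb A g)⁻¹.mulVec v) ≤ c ⬝ᵥ x := by
  obtain ⟨hdet, hred⟩ := hgood
  set u := vecMul (c ∘ g) (Wb A g)⁻¹ with hu
  have h1 : (c ∘ g) ⬝ᵥ ((Wb A g)⁻¹.mulVec v) = u ⬝ᵥ v := (dotProduct_mulVec _ _ _)
  have h2 : u ⬝ᵥ v = vecMul u A ⬝ᵥ x := by rw [← hx.2, dotProduct_mulVec]
  rw [h1, h2]
  refine Finset.sum_le_sum fun j _ => ?_
  have h3 : vecMul u A j = u ⬝ᵥ (fun i => A i j) := by simp [vecMul, dotProduct]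
  have h4 := hred j
  rw [redCost] at h4
  have := hx.1 j
  nlinarith [mul_le_mul_of_nonneg_right (by linarith [h4] : u ⬝ᵥ (fun i => A i j) ≤ c j) this]

lemma cost_basicSol {g : Fin m → ι} (hg : (Wb A g).det ≠ 0) (v : Fin m → ℝ) :
    c ⬝ᵥ basicSol A g v = (c ∘ g) ⬝ᵥ ((Wb A g)⁻¹.mulVec v) := by
  rw [basicSol, dot_expand]


lemma exists_basis_extend (hspan : Submodule.span ℝ (Set.range A.transpose) = ⊤)
    {s : Finset ι} (hs : LinearIndependent ℝ (fun j : ↥(s : Set ι) => A.transpose ↑j)) :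
    ∃ g : Fin m → ι, (Wb A g).det ≠ 0 ∧ (s : Set ι) ⊆ Set.range g := by
  classical
  have hfinj : Function.Injective (fun j : ↥(s : Set ι) => A.transpose ↑j) := hs.injective
  set S : Set (Fin m → ℝ) := A.transpose '' (s : Set ι) with hS
  have hSr : S = Set.range (fun j : ↥(s : Set ι) => A.transpose ↑j) := Set.image_eq_range _ _
  have hSli : LinearIndependent ℝ (fun x : S => (x : Fin m → ℝ)) := by
    rw [hSr]
    exact (linearIndepOn_id_range_iff hfinj).2 hs
  have hSsub : S ⊆ Set.range A.transpose := by
    rintro _ ⟨j, _, rfl⟩; exact ⟨j, rfl⟩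
  obtain ⟨bset, hbsub, hSb, hbsp, hbli'⟩ := exists_linearIndepOn_id_extension hSli hSsub
  have hbli : LinearIndependent ℝ (fun x : bset => (x : Fin m → ℝ)) := hbli'
  have hbspan : Submodule.span ℝ bset = ⊤ := by
    rw [← top_le_iff, ← hspan, Submodule.span_le]
    exact hbsp
  have hbfin : bset.Finite := hbli.setFinite
  haveI : Fintype ↥bset := hbfin.fintype
  have hbasis : Module.Basis ↥bset ℝ (Fin m → ℝ) :=
    Module.Basis.mk hbli (by rw [Subtype.range_coe, hbspan])
  have hcard : Fintype.card ↥bset = m := by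
    have h1 := Module.finrank_eq_card_basis hbasis
    simpa using h1.symm
  -- index selection
  have hpick : ∀ u : ↥bset, ∃ j : ι, A.transpose j = ↑u ∧ ((↑u ∈ S) → j ∈ s) := by
    intro u
    by_cases h : ∃ j ∈ s, A.transpose j = ↑u
    · obtain ⟨j, hj, hj2⟩ := h
      exact ⟨j, hj2, fun _ => hj⟩
    · obtain ⟨j, hj⟩ := hbsub u.2
      refine ⟨j, hj, fun hu => ?_⟩
      obtain ⟨j', hj', hj'2⟩ := hu
      exact absurd ⟨j', hj', hj'2⟩ h
  choose pick hpick1 hpick2 using hpick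
  obtain ⟨e⟩ : Nonempty (Fin m ≃ ↥bset) := ⟨(Fintype.equivFinOfCardEq hcard).symm⟩
  refine ⟨fun k => pick (e k), ?_, ?_⟩
  · -- determinant nonzero
    have hind : LinearIndependent ℝ (fun k : Fin m => ((e k : Fin m → ℝ))) :=
      hbli.comp e e.injective
    intro hdet
    obtain ⟨w, hw, hw0⟩ := (Matrix.exists_mulVec_eq_zero_iff).2 hdet
    refine hw ?_
    have hsum : ∑ k, w k • ((e k : Fin m → ℝ)) = 0 := by
      funext i
      have h0 := congrFun hw0 i
      simp only [mulVec, dotProduct, Wb_apply, Pi.zero_apply] at h0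
      simp only [Finset.sum_apply, Pi.smul_apply, smul_eq_mul, Pi.zero_apply]
      rw [← h0]
      refine Finset.sum_congr rfl fun k _ => ?_
      have hk := congrFun (hpick1 (e k)) i
      rw [Matrix.transpose_apply] at hk
      rw [← hk, mul_comm]
    have := Fintype.linearIndependent_iff.1 hind w hsum
    funext k; exact this k
  · intro j hj
    have hjS : A.transpose j ∈ S := ⟨j, hj, rfl⟩
    set u : ↥bset := ⟨A.transpose j, hSb hjS⟩ with hu
    refine ⟨e.symm u, ?_⟩
    have h1 : A.transpose (pick u) = A.transpose j := by rw [hpick1 u]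
    have h2 : pick u ∈ s := hpick2 u hjS
    have h3 : (⟨pick u, h2⟩ : ↥(s : Set ι)) = ⟨j, hj⟩ := hfinj (by simpa using h1)
    have h4 : pick u = j := congrArg Subtype.val h3
    simp [Equiv.apply_symm_apply, h4]


open scoped Classical in
/-- Support of a vector as a `Finset`. -/
noncomputable def suppF (x : ι → ℝ) : Finset ι := Finset.univ.filter (fun j => x j ≠ 0)

lemma mem_suppF {x : ι → ℝ} {j : ι} : j ∈ suppF x ↔ x j ≠ 0 := by
  simp [suppF]

lemma reduce_support {v : Fin m → ℝ} {x : ι → ℝ} (hx : IsFeas A v x)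
    (hdep : ¬ LinearIndependent ℝ (fun j : ↥((suppF x : Set ι)) => A.transpose ↑j)) :
    ∃ x', IsFeas A v x' ∧ suppF x' ⊂ suppF x := by
  classical
  obtain ⟨a, hrel, j₀, hj₀⟩ := Fintype.not_linearIndependent_iff.1 hdep
  -- build a kernel direction supported on the support of x, with a positive entry
  obtain ⟨w, hw0, hwsupp, j1, hj1⟩ :
      ∃ w : ι → ℝ, A.mulVec w = 0 ∧ (∀ j, w j ≠ 0 → x j ≠ 0) ∧ ∃ j, 0 < w j := by
    set w : ι → ℝ := fun j => if h : j ∈ suppF x then a ⟨j, by simpa using h⟩ else 0 with hwdef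
    have hwsupp : ∀ j, w j ≠ 0 → x j ≠ 0 := by
      intro j hj
      by_contra hxj
      simp only [hwdef, mem_suppF] at hj
      rw [dif_neg (by simpa using hxj)] at hj
      exact hj rfl
    have hker : A.mulVec w = 0 := by
      funext i
      have h0 := congrFun hrel i
      simp only [Finset.sum_apply, Pi.smul_apply, smul_eq_mul, Pi.zero_apply] at h0
      simp only [mulVec, dotProduct, Pi.zero_apply]
      rw [← h0]
      rw [← Finset.sum_subset (Finset.subset_univ (suppF x))
        (fun j _ hj => by simp only [hwdef]; rw [dif_neg hj, mul_zero])]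
      rw [Finset.sum_subtype (suppF x) (fun j => Finset.mem_coe.symm)
        (fun j => A i j * w j)]
      refine Finset.sum_congr rfl fun j _ => ?_
      simp only [hwdef]
      rw [dif_pos (Finset.mem_coe.1 j.2), Matrix.transpose_apply, mul_comm]
    have hwne : w ↑j₀ ≠ 0 := by
      have hj₀m : (↑j₀ : ι) ∈ suppF x := Finset.mem_coe.1 j₀.2
      simp only [hwdef]
      rw [dif_pos hj₀m]
      exact hj₀
    by_cases hpos : ∃ j, 0 < w j
    · exact ⟨w, hker, hwsupp, hpos⟩
    · push_neg at hpos
      refine ⟨-w, by rw [Matrix.mulVec_neg, hker, neg_zero],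
        fun j hj => hwsupp j (by simpa using hj), ↑j₀, ?_⟩
      rcases lt_or_eq_of_le (hpos ↑j₀) with h | h
      · simpa using h
      · exact absurd h hwne
  -- ratio test
  set P : Finset ι := Finset.univ.filter (fun j => 0 < w j) with hP
  have hPne : P.Nonempty := ⟨j1, by simp [hP, hj1]⟩
  obtain ⟨js, hjs, hmin⟩ := Finset.exists_min_image P (fun j => x j / w j) hPne
  have hwjs : 0 < w js := by simpa [hP] using hjs
  set t : ℝ := x js / w js with ht
  have ht0 : 0 ≤ t := div_nonneg (hx.1 js) hwjs.le
  refine ⟨fun j => x j - t * w j, ⟨fun j => ?_, ?_⟩, ?_⟩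
  · show 0 ≤ x j - t * w j
    rcases lt_trichotomy (w j) 0 with h | h | h
    · have h2 : 0 ≤ t * (-w j) := mul_nonneg ht0 (by linarith)
      have := hx.1 j
      nlinarith
    · simp [h, hx.1 j]
    · have hj : j ∈ P := by simp [hP, h]
      have h2 := (le_div_iff₀ h).1 (hmin j hj)
      linarith
  · have heq : (fun j => x j - t * w j) = x - t • w := by
      funext j; simp only [Pi.sub_apply, Pi.smul_apply, smul_eq_mul]
    rw [heq, Matrix.mulVec_sub, Matrix.mulVec_smul, hw0, hx.2]
    simp
  · constructor
    · intro j hj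
      have hj' : x j - t * w j ≠ 0 := by simpa [mem_suppF] using hj
      rw [mem_suppF]
      intro hxj
      have hwj : w j = 0 := by
        by_contra hwj
        exact (hwsupp j hwj) hxj
      rw [hxj, hwj] at hj'
      simp at hj'
    · intro hsub
      have hjs_mem : js ∈ suppF x := mem_suppF.2 (hwsupp js (ne_of_gt hwjs))
      have hmem := hsub hjs_mem
      rw [mem_suppF] at hmem
      refine hmem ?_
      show x js - t * w js = 0
      rw [ht]
      field_simp
      ring

lemma exists_feasible_basis (hspan : Submodule.span ℝ (Set.range A.transpose) = ⊤)
    {v : Fin m → ℝ} (hfe : ∃ x, IsFeas A v x) :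
    ∃ g : Fin m → ι, (Wb A g).det ≠ 0 ∧ ∀ i, 0 ≤ (Wb A g)⁻¹.mulVec v i := by
  obtain ⟨x, hx⟩ := hfe
  have H : ∀ n : ℕ, ∀ x : ι → ℝ, (suppF x).card ≤ n → IsFeas A v x →
      ∃ g : Fin m → ι, (Wb A g).det ≠ 0 ∧ ∀ i, 0 ≤ (Wb A g)⁻¹.mulVec v i := by
    intro n
    induction n with
    | zero =>
      intro x hcard hx
      by_cases hli : LinearIndependent ℝ (fun j : ↥((suppF x : Set ι)) => A.transpose ↑j)
      · obtain ⟨g, hg, hrange⟩ := exists_basis_extend A hspan hli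
        obtain ⟨h1, _⟩ := comp_eq_inv_mulVec A hg
          (fun j hj => hrange (by simpa [mem_suppF] using hj)) hx.2
        refine ⟨g, hg, fun i => ?_⟩
        rw [← h1]
        exact hx.1 (g i)
      · obtain ⟨x', hx', hlt⟩ := reduce_support A hx hli
        have := Finset.card_lt_card hlt
        exact absurd (lt_of_lt_of_le this hcard) (Nat.not_lt_zero _)
    | succ n ih =>
      intro x hcard hx
      by_cases hli : LinearIndependent ℝ (fun j : ↥((suppF x : Set ι)) => A.transpose ↑j)
      · obtain ⟨g, hg, hrange⟩ := exists_basis_extend A hspan hli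
        obtain ⟨h1, _⟩ := comp_eq_inv_mulVec A hg
          (fun j hj => hrange (by simpa [mem_suppF] using hj)) hx.2
        refine ⟨g, hg, fun i => ?_⟩
        rw [← h1]
        exact hx.1 (g i)
      · obtain ⟨x', hx', hlt⟩ := reduce_support A hx hli
        have := Finset.card_lt_card hlt
        exact ih x' (by omega) hx'
  exact H (suppF x).card x le_rfl hx

lemma dot_ind (c : ι → ℝ) (j₀ : ι) (t : ℝ) :
    c ⬝ᵥ (fun j => if j = j₀ then t else 0) = c j₀ * t := by
  simp [dotProduct, mul_ite, Finset.sum_ite_eq']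

lemma mulVec_ind (j₀ : ι) (t : ℝ) :
    A.mulVec (fun j => if j = j₀ then t else 0) = fun i => A i j₀ * t := by
  funext i
  simp [mulVec, dotProduct, mul_ite, Finset.sum_ite_eq']

/-- Core lemma: in the nondegenerate case, there is a primal and dual feasible basis. -/
lemma exists_good_basis_nondeg (c : ι → ℝ)
    (hspan : Submodule.span ℝ (Set.range A.transpose) = ⊤)
    (hrec : ∀ w : ι → ℝ, (∀ j, 0 ≤ w j) → A.mulVec w = 0 → 0 ≤ c ⬝ᵥ w)
    {v : Fin m → ℝ}
    (hnd : ∀ g : Fin m → ι, (Wb A g).det ≠ 0 → ∀ i, (Wb A g)⁻¹.mulVec v i ≠ 0)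
    (hfe : ∃ x, IsFeas A v x) :
    ∃ g : Fin m → ι, GoodBasis A c g ∧ ∀ i, 0 ≤ (Wb A g)⁻¹.mulVec v i := by
  classical
  set G : Set (Fin m → ι) := {g | (Wb A g).det ≠ 0 ∧ ∀ i, 0 ≤ (Wb A g)⁻¹.mulVec v i} with hG
  have hGne : G.Nonempty := by
    obtain ⟨g, h1, h2⟩ := exists_feasible_basis A hspan hfe
    exact ⟨g, h1, h2⟩
  obtain ⟨g, hgG, hmin⟩ := Set.exists_min_image G
    (fun g => (c ∘ g) ⬝ᵥ ((Wb A g)⁻¹.mulVec v)) (Set.toFinite G) hGne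
  obtain ⟨hdet, hfeasg⟩ := hgG
  refine ⟨g, ⟨hdet, ?_⟩, hfeasg⟩
  by_contra hbad
  push_neg at hbad
  obtain ⟨j₀, hj₀⟩ := hbad
  have hinj := injective_of_det_ne_zero hdet
  have hdetU : IsUnit (Wb A g).det := isUnit_iff_ne_zero.2 hdet
  set xB : Fin m → ℝ := (Wb A g)⁻¹.mulVec v with hxB
  have hxBpos : ∀ i, 0 < xB i := fun i => lt_of_le_of_ne (hfeasg i) (Ne.symm (hnd g hdet i))
  set h : Fin m → ℝ := (Wb A g)⁻¹.mulVec (fun i => A i j₀) with hh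
  have hWh : (Wb A g).mulVec h = fun i => A i j₀ := by
    rw [hh, mulVec_mulVec, mul_nonsing_inv _ hdetU, one_mulVec]
  set u : Fin m → ℝ := vecMul (c ∘ g) (Wb A g)⁻¹ with hu
  have hch : (c ∘ g) ⬝ᵥ h = u ⬝ᵥ (fun i => A i j₀) := by
    rw [hh, hu, dotProduct_mulVec]
  have hj₀r : j₀ ∉ Set.range g := by
    rintro ⟨k, rfl⟩
    rw [redCost_comp_basis A c hdet k] at hj₀
    exact lt_irrefl 0 hj₀
  have hred : redCost A c g j₀ = c j₀ - u ⬝ᵥ (fun i => A i j₀) := rfl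
  by_cases hcase : ∀ i, h i ≤ 0
  · -- unbounded direction, contradicting hrec
    set w : ι → ℝ := expand g (fun i => -h i) + (fun j => if j = j₀ then 1 else 0) with hw
    have hw0 : ∀ j, 0 ≤ w j := by
      intro j
      have h1 := expand_nonneg (g := g) (w := fun i => -h i) (fun i => by show (0:ℝ) ≤ -h i; linarith [hcase i]) j
      have h2 : (0:ℝ) ≤ if j = j₀ then 1 else 0 := by split <;> norm_num
      simpa [hw] using add_nonneg h1 h2
    have hAw : A.mulVec w = 0 := by
      rw [hw, Matrix.mulVec_add, mulVec_expand, mulVec_ind]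
      have : (Wb A g).mulVec (fun i => -h i) = -(fun i => A i j₀) := by
        have hneg : (fun i => -h i) = -h := rfl
        rw [hneg, Matrix.mulVec_neg, hWh]
      rw [this]
      funext i
      simp
    have hcw : c ⬝ᵥ w = redCost A c g j₀ := by
      rw [hw, dotProduct_add, dot_expand, dot_ind, hred]
      have : (fun i => -h i) = -h := rfl
      rw [this, dotProduct_neg, hch]
      ring
    have := hrec w hw0 hAw
    rw [hcw] at this
    linarith
  · -- pivot to a cheaper feasible basis
    push_neg at hcase
    obtain ⟨i1, hi1⟩ := hcase
    set P : Finset (Fin m) := Finset.univ.filter (fun i => 0 < h i) with hP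
    have hPne : P.Nonempty := ⟨i1, by simp [hP, hi1]⟩
    obtain ⟨is, his, hmins⟩ := Finset.exists_min_image P (fun i => xB i / h i) hPne
    have hhis : 0 < h is := by simpa [hP] using his
    set t : ℝ := xB is / h is with ht
    have ht0 : 0 < t := div_pos (hxBpos is) hhis
    set g' : Fin m → ι := Function.update g is j₀ with hg'
    set E : Matrix (Fin m) (Fin m) ℝ := (1 : Matrix (Fin m) (Fin m) ℝ).updateCol is h
      with hE
    have hWE : Wb A g' = Wb A g * E := by
      funext i l
      rw [Matrix.mul_apply]
      by_cases hl : l = is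
      · have h2 : ∑ k, Wb A g i k * E k l = (Wb A g).mulVec h i := by
          simp only [mulVec, dotProduct]
          refine Finset.sum_congr rfl fun k _ => ?_
          rw [hE, hl, Matrix.updateCol_self]
        rw [h2, hWh, Wb_apply, hg', hl, Function.update_self]
      · have h1 : ∀ k, E k l = if k = l then 1 else 0 := by
          intro k; rw [hE, Matrix.updateCol_ne hl, Matrix.one_apply]
        rw [Finset.sum_congr rfl (fun k _ => by rw [h1 k])]
        simp only [mul_ite, mul_one, mul_zero, Finset.sum_ite_eq', Finset.mem_univ, if_true]
        rw [Wb_apply, hg', Function.update_of_ne hl]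
        rfl
    have hdet' : (Wb A g').det ≠ 0 := by
      have hdE : E.det = h is := by
        rw [hE, ← Matrix.cramer_apply, Matrix.cramer_one]
        simp
      rw [hWE, Matrix.det_mul, hdE]
      exact mul_ne_zero hdet (ne_of_gt hhis)
    have hsub : (fun i => xB i - t * h i) = xB - t • h := by
      funext i; simp only [Pi.sub_apply, Pi.smul_apply, smul_eq_mul]
    set p : ι → ℝ := expand g (fun i => xB i - t * h i) + (fun j => if j = j₀ then t else 0)
      with hp
    have hWxB : (Wb A g).mulVec xB = v := by
      rw [hxB, mulVec_mulVec, mul_nonsing_inv _ hdetU, one_mulVec]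
    have hAp : A.mulVec p = v := by
      rw [hp, Matrix.mulVec_add, mulVec_expand, mulVec_ind, hsub, Matrix.mulVec_sub,
        Matrix.mulVec_smul, hWh, hWxB]
      funext i
      simp only [Pi.add_apply, Pi.sub_apply, Pi.smul_apply, smul_eq_mul]
      ring
    have h1 : ∀ i, 0 ≤ xB i - t * h i := by
      intro i
      rcases le_or_gt (h i) 0 with hhi | hhi
      · nlinarith [hxBpos i, mul_nonneg ht0.le (neg_nonneg.2 hhi)]
      · have hiP : i ∈ P := by simp [hP, hhi]
        have h2 := (le_div_iff₀ hhi).1 (hmins i hiP)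
        linarith
    have hp0 : ∀ j, 0 ≤ p j := by
      intro j
      have h2 := expand_nonneg (g := g) (w := fun i => xB i - t * h i)
        (fun i => by show (0:ℝ) ≤ xB i - t * h i; exact h1 i) j
      have h3 : (0:ℝ) ≤ if j = j₀ then t else 0 := by split; exacts [ht0.le, le_rfl]
      have := add_nonneg h2 h3
      simpa [hp] using this
    have hpsupp : ∀ j, p j ≠ 0 → j ∈ Set.range g' := by
      intro j hpj
      by_cases hj : j = j₀
      · exact ⟨is, by rw [hg', Function.update_self, hj]⟩
      · have hne0 : expand g (fun i => xB i - t * h i) j ≠ 0 := by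
          intro hz
          apply hpj
          rw [hp]
          show expand g (fun i => xB i - t * h i) j + (if j = j₀ then t else 0) = 0
          simp [hz, hj]
        have hex : ∃ i, g i = j ∧ xB i - t * h i ≠ 0 := by
          by_contra hno
          push_neg at hno
          exact hne0 (expand_eq_zero (fun i hi => hno i hi))
        obtain ⟨i, hgi, hne⟩ := hex
        have hiis : i ≠ is := by
          intro hii; subst hii
          apply hne
          rw [ht]
          field_simp
          ring
        exact ⟨i, by rw [hg', Function.update_of_ne hiis, hgi]⟩
    obtain ⟨hcomp, -⟩ := comp_eq_inv_mulVec A hdet' hpsupp hAp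
    have hg'G : g' ∈ G := by
      refine ⟨hdet', fun i => ?_⟩
      rw [← congrFun hcomp i]
      exact hp0 (g' i)
    have hinj' := injective_of_det_ne_zero hdet'
    have hcost : (c ∘ g') ⬝ᵥ ((Wb A g')⁻¹.mulVec v) = c ⬝ᵥ p := by
      rw [← hcomp]
      conv_rhs => rw [eq_expand_comp hinj' hpsupp]
      rw [dot_expand]
    have hcp : c ⬝ᵥ p = (c ∘ g) ⬝ᵥ xB + t * redCost A c g j₀ := by
      rw [hp, dotProduct_add, dot_expand, dot_ind, hred, hsub]
      have hdot : (c ∘ g) ⬝ᵥ (xB - t • h) = (c ∘ g) ⬝ᵥ xB - t * ((c ∘ g) ⬝ᵥ h) := by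
        simp [dotProduct, Finset.mul_sum, Finset.sum_sub_distrib, mul_comm, mul_assoc, mul_left_comm, sub_mul, mul_sub]
      rw [hdot, hch]
      ring
    have hfinal : (c ∘ g) ⬝ᵥ ((Wb A g)⁻¹.mulVec v) ≤ (c ∘ g') ⬝ᵥ ((Wb A g')⁻¹.mulVec v) :=
      hmin g' hg'G
    rw [hcost, hcp] at hfinal
    have hneg : t * redCost A c g j₀ < 0 := mul_neg_of_pos_of_neg ht0 hj₀
    rw [← hxB] at hfinal
    linarith
open Polynomial in
/-- Main existence lemma: a primal-and-dual feasible basis exists, assuming feasibility,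
boundedness in direction form, spanning columns and the possibility to absorb nonnegative
perturbations of the right-hand side. -/
lemma exists_good_basis (c : ι → ℝ)
    (hspan : Submodule.span ℝ (Set.range A.transpose) = ⊤)
    (hrec : ∀ w : ι → ℝ, (∀ j, 0 ≤ w j) → A.mulVec w = 0 → 0 ≤ c ⬝ᵥ w)
    (hslack : ∀ δ : Fin m → ℝ, (∀ i, 0 ≤ δ i) → ∀ v : Fin m → ℝ,
      (∃ x, IsFeas A v x) → ∃ x', IsFeas A (v + δ) x')
    {v : Fin m → ℝ} (hfe : ∃ x, IsFeas A v x) :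
    ∃ g : Fin m → ι, GoodBasis A c g ∧ ∀ i, 0 ≤ (Wb A g)⁻¹.mulVec v i := by
  classical
  -- the perturbation polynomials
  set q : (Fin m → ι) → Fin m → Polynomial ℝ := fun g i =>
    C ((Wb A g)⁻¹.mulVec v i) + ∑ k : Fin m, C ((Wb A g)⁻¹ i k) * X ^ ((k:ℕ)+1) with hq
  have hqcoeff : ∀ g i (k : Fin m), (q g i).coeff ((k:ℕ)+1) = (Wb A g)⁻¹ i k := by
    intro g i k
    rw [hq]
    simp only [coeff_add, coeff_C, Polynomial.finset_sum_coeff, coeff_C_mul, coeff_X_pow]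
    rw [if_neg (Nat.succ_ne_zero _), zero_add]
    rw [Finset.sum_eq_single k]
    · simp
    · intro k' _ hk'
      have hne : ¬((k:ℕ)+1 = (k':ℕ)+1) := by
        intro h
        exact hk' (Fin.ext (by omega))
      simp [hne, Fin.val_inj, Ne.symm hk']
    · simp
  have hrow : ∀ g : Fin m → ι, (Wb A g).det ≠ 0 → ∀ i, ∃ k, (Wb A g)⁻¹ i k ≠ 0 := by
    intro g hg i
    by_contra hnone
    push_neg at hnone
    have h1 : ((Wb A g)⁻¹ * (Wb A g)) i i = 1 := by
      rw [nonsing_inv_mul _ (isUnit_iff_ne_zero.2 hg)]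
      simp
    rw [Matrix.mul_apply] at h1
    have h2 : ∀ k ∈ Finset.univ, (Wb A g)⁻¹ i k * (Wb A g) k i = 0 := by
      intro k _; rw [hnone k, zero_mul]
    rw [Finset.sum_eq_zero h2] at h1
    norm_num at h1
  have hqne : ∀ g : Fin m → ι, (Wb A g).det ≠ 0 → ∀ i, q g i ≠ 0 := by
    intro g hg i h0
    obtain ⟨k, hk⟩ := hrow g hg i
    apply hk
    rw [← hqcoeff g i k, h0, coeff_zero]
  -- the finite set of bad epsilons
  set bad : Set ℝ := ⋃ g ∈ {g : Fin m → ι | (Wb A g).det ≠ 0}, ⋃ i : Fin m,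
    {ε : ℝ | (q g i).IsRoot ε} with hbad
  have hbadfin : bad.Finite := by
    refine Set.Finite.biUnion (Set.toFinite _) fun g hg => ?_
    exact Set.finite_iUnion fun i => Polynomial.finite_setOf_isRoot (hqne g hg i)
  -- thresholds
  set τ : (Fin m → ι) → Fin m → ℝ := fun g i =>
    if (Wb A g)⁻¹.mulVec v i < 0 then
      (-((Wb A g)⁻¹.mulVec v i)) / ((∑ k, |(Wb A g)⁻¹ i k|) + 1)
    else 1 with hτ
  have hτpos : ∀ g i, 0 < τ g i := by
    intro g i
    show 0 < if ((Wb A g)⁻¹ *ᵥ v) i < 0 then -((Wb A g)⁻¹ *ᵥ v) i / ((∑ k : Fin m, |(Wb A g)⁻¹ i k|) + 1) else 1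
    split_ifs with h
    · apply div_pos (by linarith)
      have : (0:ℝ) ≤ ∑ k, |(Wb A g)⁻¹ i k| := Finset.sum_nonneg fun k _ => abs_nonneg _
      linarith
    · norm_num
  set S : Finset ℝ := Finset.image (fun gi : (Fin m → ι) × Fin m => τ gi.1 gi.2)
    Finset.univ with hS
  -- choose epsilon
  obtain ⟨ε, hε⟩ : ∃ ε : ℝ, (0 < ε ∧ ε < 1 ∧ ∀ s ∈ S, ε < s) ∧ ε ∉ bad := by
    set c0 : ℝ := (insert (1:ℝ) S).min' (Finset.insert_nonempty _ _) with hc0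
    have hc0pos : 0 < c0 := by
      have := Finset.min'_mem (insert (1:ℝ) S) (Finset.insert_nonempty _ _)
      rw [← hc0] at this
      rcases Finset.mem_insert.1 this with h | h
      · rw [h]; norm_num
      · rw [hS] at h
        obtain ⟨gi, _, hgi⟩ := Finset.mem_image.1 h
        rw [← hgi]; exact hτpos _ _
    have hinf : (Set.Ioo (0:ℝ) c0).Infinite := Set.Ioo_infinite hc0pos
    obtain ⟨ε, hε⟩ := (hinf.diff hbadfin).nonempty
    refine ⟨ε, ⟨hε.1.1, ?_, fun s hs => ?_⟩, hε.2⟩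
    · calc ε < c0 := hε.1.2
        _ ≤ 1 := Finset.min'_le _ _ (Finset.mem_insert_self _ _)
    · calc ε < c0 := hε.1.2
        _ ≤ s := Finset.min'_le _ _ (Finset.mem_insert_of_mem hs)
  obtain ⟨⟨hε0, hε1, hεS⟩, hεbad⟩ := hε
  -- the perturbed right-hand side
  set δ : Fin m → ℝ := fun i => ε ^ ((i:ℕ)+1) with hδ
  have hδ0 : ∀ i, 0 ≤ δ i := fun i => pow_nonneg hε0.le _
  set v' : Fin m → ℝ := v + δ with hv'
  have hfe' : ∃ x', IsFeas A v' x' := hslack δ hδ0 v hfe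
  have heval : ∀ g : Fin m → ι, ∀ i, (Wb A g)⁻¹.mulVec v' i = (q g i).eval ε := by
    intro g i
    rw [hv', Matrix.mulVec_add, hq]
    simp only [Pi.add_apply, eval_add, eval_C, eval_finset_sum, eval_mul, eval_pow, eval_X]
    have hds : ((Wb A g)⁻¹ *ᵥ δ) i = ∑ x : Fin m, (Wb A g)⁻¹ i x * ε ^ ((x:ℕ) + 1) := by
      simp [mulVec, dotProduct, hδ]
    rw [hds]
  have hnd : ∀ g : Fin m → ι, (Wb A g).det ≠ 0 → ∀ i, (Wb A g)⁻¹.mulVec v' i ≠ 0 := by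
    intro g hg i
    rw [heval g i]
    intro h0
    apply hεbad
    rw [hbad]
    refine Set.mem_biUnion hg (Set.mem_iUnion.2 ⟨i, h0⟩)
  obtain ⟨g, hgood, hfeas'⟩ := exists_good_basis_nondeg A c hspan hrec hnd hfe'
  refine ⟨g, hgood, fun i => ?_⟩
  by_contra hlt
  push_neg at hlt
  -- then also the perturbed value is negative, contradiction
  have hτdef : τ g i = (-((Wb A g)⁻¹.mulVec v i)) / ((∑ k, |(Wb A g)⁻¹ i k|) + 1) := by
    show (if ((Wb A g)⁻¹ *ᵥ v) i < 0 then -((Wb A g)⁻¹ *ᵥ v) i / ((∑ k : Fin m, |(Wb A g)⁻¹ i k|) + 1) else 1) = _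
    rw [if_pos hlt]
  have hετ : ε < τ g i := hεS _ (Finset.mem_image.2 ⟨(g, i), Finset.mem_univ _, rfl⟩)
  set Sa : ℝ := ∑ k, |(Wb A g)⁻¹ i k| with hSa
  have hSa0 : 0 ≤ Sa := Finset.sum_nonneg fun k _ => abs_nonneg _
  have hbound : (Wb A g)⁻¹.mulVec δ i ≤ Sa * ε := by
    have h1 : (Wb A g)⁻¹.mulVec δ i = ∑ k, (Wb A g)⁻¹ i k * ε ^ ((k:ℕ)+1) := by
      simp [mulVec, dotProduct, hδ]
    rw [h1, hSa, Finset.sum_mul]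
    refine Finset.sum_le_sum fun k _ => ?_
    have h2 : (Wb A g)⁻¹ i k * ε ^ ((k:ℕ)+1) ≤ |(Wb A g)⁻¹ i k| * ε ^ ((k:ℕ)+1) :=
      mul_le_mul_of_nonneg_right (le_abs_self _) (pow_nonneg hε0.le _)
    have h3 : ε ^ ((k:ℕ)+1) ≤ ε := pow_le_of_le_one hε0.le hε1.le (Nat.succ_ne_zero _)
    nlinarith [abs_nonneg ((Wb A g)⁻¹ i k)]
  have hτval : (Sa + 1) * τ g i = -((Wb A g)⁻¹.mulVec v i) := by
    rw [hτdef, hSa]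
    field_simp
  have hv'neg : (Wb A g)⁻¹.mulVec v' i < 0 := by
    have h4 : (Wb A g)⁻¹.mulVec v' i = (Wb A g)⁻¹.mulVec v i + (Wb A g)⁻¹.mulVec δ i := by
      rw [hv', Matrix.mulVec_add]; rfl
    have h5 : Sa * ε ≤ Sa * τ g i := mul_le_mul_of_nonneg_left hετ.le hSa0
    have h6 : Sa * τ g i < (Sa + 1) * τ g i := by nlinarith [hτpos g i]
    rw [h4]
    calc (Wb A g)⁻¹.mulVec v i + (Wb A g)⁻¹.mulVec δ i
        ≤ (Wb A g)⁻¹.mulVec v i + Sa * ε := by linarith [hbound]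
      _ < (Wb A g)⁻¹.mulVec v i + (Sa + 1) * τ g i := by linarith
      _ = 0 := by rw [hτval]; ring
  linarith [hfeas' i]

end WithA


section Standard

variable {ny : ℕ}

/-- Column index type for the standard form: `y⁺`, `y⁻` and slacks. -/
abbrev Jt (ny m : ℕ) := (Fin ny ⊕ Fin ny) ⊕ Fin m

variable (B : Matrix (Fin m) (Fin ny) ℝ) (d : Fin ny → ℝ)

/-- Standard-form constraint matrix `[B, -B, I]`. -/
def Amat : Matrix (Fin m) (Jt ny m) ℝ :=
  fun i j => Sum.elim (Sum.elim (fun p => B i p) (fun p => -B i p))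
    (fun k => if k = i then (1:ℝ) else 0) j

/-- Standard-form cost vector `(d, -d, 0)`. -/
def cvec : Jt ny m → ℝ := Sum.elim (Sum.elim d (fun p => -d p)) 0

/-- Recover `y` from a standard-form point. -/
def yOf (x : Jt ny m → ℝ) : Fin ny → ℝ :=
  fun p => x (Sum.inl (Sum.inl p)) - x (Sum.inl (Sum.inr p))

/-- Standard-form point from `y` and slacks. -/
def xOf (y : Fin ny → ℝ) (s : Fin m → ℝ) : Jt ny m → ℝ :=
  Sum.elim (Sum.elim (fun p => max (y p) 0) (fun p => max (-(y p)) 0)) s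

lemma mulVec_Amat (x : Jt ny m → ℝ) (i : Fin m) :
    (Amat B).mulVec x i = B.mulVec (yOf x) i + x (Sum.inr i) := by
  simp only [mulVec, dotProduct, Fintype.sum_sum_type, Amat, Sum.elim_inl, Sum.elim_inr,
    yOf]
  have h3 : ∑ k : Fin m, (if k = i then (1:ℝ) else 0) * x (Sum.inr k) = x (Sum.inr i) := by
    simp
  rw [h3]
  have h4 : ∑ p : Fin ny, B i p * (x (Sum.inl (Sum.inl p)) - x (Sum.inl (Sum.inr p)))
      = ∑ p : Fin ny, B i p * x (Sum.inl (Sum.inl p))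
        + ∑ p : Fin ny, -B i p * x (Sum.inl (Sum.inr p)) := by
    rw [← Finset.sum_add_distrib]
    refine Finset.sum_congr rfl fun p _ => by ring
  rw [h4]

lemma cost_eq (x : Jt ny m → ℝ) : cvec d ⬝ᵥ x = d ⬝ᵥ yOf x := by
  simp only [dotProduct, Fintype.sum_sum_type, cvec, Sum.elim_inl, Sum.elim_inr, yOf,
    Pi.zero_apply, zero_mul, Finset.sum_const_zero, add_zero]
  have h4 : ∑ p : Fin ny, d p * (x (Sum.inl (Sum.inl p)) - x (Sum.inl (Sum.inr p)))
      = ∑ p : Fin ny, d p * x (Sum.inl (Sum.inl p))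
        + ∑ p : Fin ny, -d p * x (Sum.inl (Sum.inr p)) := by
    rw [← Finset.sum_add_distrib]
    refine Finset.sum_congr rfl fun p _ => by ring
  rw [h4]

lemma yOf_xOf (y : Fin ny → ℝ) (s : Fin m → ℝ) : yOf (xOf y s) = y := by
  funext p
  simp only [yOf, xOf, Sum.elim_inl, Sum.elim_inr]
  rcases le_total 0 (y p) with h | h
  · rw [max_eq_left h, max_eq_right (by linarith)]
    ring
  · rw [max_eq_right h, max_eq_left (by linarith)]
    ring

lemma xOf_nonneg {y : Fin ny → ℝ} {s : Fin m → ℝ} (hs : ∀ i, 0 ≤ s i) (j : Jt ny m) :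
    0 ≤ xOf y s j := by
  rcases j with (p | p) | k
  · exact le_max_right _ _
  · exact le_max_right _ _
  · exact hs k

lemma isFeas_xOf {y : Fin ny → ℝ} {v : Fin m → ℝ} (hy : ∀ i, B.mulVec y i ≤ v i) :
    IsFeas (Amat B) v (xOf y (v - B.mulVec y)) := by
  refine ⟨xOf_nonneg (fun i => by simp [hy i]) , ?_⟩
  funext i
  rw [mulVec_Amat, yOf_xOf]
  simp [xOf]

lemma hspan_Amat : Submodule.span ℝ (Set.range (Amat B).transpose) = ⊤ := by
  rw [eq_top_iff]
  rintro w -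
  have hw : w = ∑ k, w k • (Amat B).transpose (Sum.inr k) := by
    funext i
    simp only [Finset.sum_apply, Pi.smul_apply, smul_eq_mul, Matrix.transpose_apply, Amat,
      Sum.elim_inr, mul_ite, mul_one, mul_zero]
    rw [Finset.sum_congr rfl (fun k _ => by rw [show ((if k = i then w k else 0) : ℝ)
      = if k = i then w k else 0 from rfl])]
    rw [Finset.sum_ite_eq' Finset.univ i w]
    simp
  rw [hw]
  exact Submodule.sum_mem _ fun k _ =>
    Submodule.smul_mem _ _ (Submodule.subset_span ⟨Sum.inr k, rfl⟩)

lemma hslack_Amat : ∀ δ : Fin m → ℝ, (∀ i, 0 ≤ δ i) → ∀ v : Fin m → ℝ,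
    (∃ x, IsFeas (Amat B) v x) → ∃ x', IsFeas (Amat B) (v + δ) x' := by
  intro δ hδ v ⟨x, hx⟩
  refine ⟨x + xOf 0 δ, fun j => add_nonneg (hx.1 j) (xOf_nonneg hδ j), ?_⟩
  rw [Matrix.mulVec_add, hx.2]
  congr 1
  funext i
  rw [mulVec_Amat, yOf_xOf]
  simp [xOf, Matrix.mulVec_zero]

lemma hrec_Amat {v : Fin m → ℝ} {lb : ℝ}
    (hb : ∀ y : Fin ny → ℝ, (∀ i, B.mulVec y i ≤ v i) → lb ≤ d ⬝ᵥ y)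
    (hf : ∃ y : Fin ny → ℝ, ∀ i, B.mulVec y i ≤ v i) :
    ∀ w : Jt ny m → ℝ, (∀ j, 0 ≤ w j) → (Amat B).mulVec w = 0 → 0 ≤ cvec d ⬝ᵥ w := by
  intro w hw hAw
  by_contra hneg
  push_neg at hneg
  obtain ⟨y₀, hy₀⟩ := hf
  set x₀ : Jt ny m → ℝ := xOf y₀ (v - B.mulVec y₀) with hx₀
  have hx₀feas : IsFeas (Amat B) v x₀ := isFeas_xOf B hy₀
  set cw : ℝ := cvec d ⬝ᵥ w with hcw
  set t : ℝ := (cvec d ⬝ᵥ x₀ - lb + 1) / (-cw) with htdef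
  have hlb0 : lb ≤ cvec d ⬝ᵥ x₀ := by
    rw [cost_eq]
    exact hb _ (fun i => by rw [hx₀, yOf_xOf]; exact hy₀ i)
  have ht0 : 0 ≤ t := by
    apply div_nonneg (by linarith)
    linarith
  -- the shifted point is feasible
  have hfeast : IsFeas (Amat B) v (x₀ + t • w) := by
    refine ⟨fun j => add_nonneg (hx₀feas.1 j) (by
      have := mul_nonneg ht0 (hw j)
      simpa using this), ?_⟩
    rw [Matrix.mulVec_add, Matrix.mulVec_smul, hAw, hx₀feas.2]
    simp
  have hyfeas : ∀ i, B.mulVec (yOf (x₀ + t • w)) i ≤ v i := by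
    intro i
    have h1 := mulVec_Amat B (x₀ + t • w) i
    rw [hfeast.2] at h1
    have h2 : 0 ≤ (x₀ + t • w) (Sum.inr i) := hfeast.1 _
    linarith [h1.symm.le]
  have hval := hb _ hyfeas
  rw [← cost_eq] at hval
  have hsplit : cvec d ⬝ᵥ (x₀ + t • w) = cvec d ⬝ᵥ x₀ + t * cw := by
    rw [hcw, dotProduct_add, dotProduct_smul, smul_eq_mul]
  have hcwne : cw ≠ 0 := ne_of_lt hneg
  have htcw : t * cw = -(cvec d ⬝ᵥ x₀ - lb + 1) := by
    rw [htdef, div_mul_eq_mul_div, mul_div_assoc, div_neg, div_self hcwne]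
    ring
  rw [hsplit, htcw] at hval
  linarith
  
/-- The matrix extracting `y` from basis coefficients. -/
def Mg (g : Fin m → Jt ny m) : Matrix (Fin ny) (Fin m) ℝ :=
  fun p i => (if g i = Sum.inl (Sum.inl p) then (1:ℝ) else 0) -
    (if g i = Sum.inl (Sum.inr p) then (1:ℝ) else 0)

lemma yOf_expand (g : Fin m → Jt ny m) (w : Fin m → ℝ) :
    yOf (expand g w) = (Mg g).mulVec w := by
  funext p
  simp only [yOf, expand, mulVec, dotProduct, Mg]
  rw [← Finset.sum_sub_distrib]
  refine Finset.sum_congr rfl fun i _ => ?_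
  by_cases h1 : g i = Sum.inl (Sum.inl p) <;> by_cases h2 : g i = Sum.inl (Sum.inr p) <;>
    simp [h1, h2] at * <;> ring

/-- Region optimality: a good basis that is primal feasible at `v` yields an optimal `y`. -/
lemma region_opt {g : Fin m → Jt ny m} (hgood : GoodBasis (Amat B) (cvec d) g)
    {v : Fin m → ℝ} (hfeas : ∀ i, 0 ≤ (Wb (Amat B) g)⁻¹.mulVec v i) :
    (∀ k, B.mulVec (yOf (basicSol (Amat B) g v)) k ≤ v k) ∧
    (∀ y' : Fin ny → ℝ, (∀ k, B.mulVec y' k ≤ v k) →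
      d ⬝ᵥ yOf (basicSol (Amat B) g v) ≤ d ⬝ᵥ y') := by
  have hdet := hgood.1
  have hxnn : ∀ j, 0 ≤ basicSol (Amat B) g v j := by
    intro j
    exact expand_nonneg (fun i => hfeas i) j
  have hAx : (Amat B).mulVec (basicSol (Amat B) g v) = v := mulVec_basicSol _ hdet v
  constructor
  · intro k
    have h1 := mulVec_Amat B (basicSol (Amat B) g v) k
    rw [hAx] at h1
    have h2 := hxnn (Sum.inr k)
    linarith [h1.symm.le]
  · intro y' hy'
    have hx' := isFeas_xOf B hy'
    have hwd := good_basis_le (Amat B) (cvec d) hgood hx'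
    have h3 : cvec d ⬝ᵥ basicSol (Amat B) g v
        = (cvec d ∘ g) ⬝ᵥ ((Wb (Amat B) g)⁻¹.mulVec v) := cost_basicSol _ _ hdet v
    rw [cost_eq] at hwd
    rw [yOf_xOf] at hwd
    rw [← cost_eq, h3]
    exact hwd

end Standard

end Stmt8Aux

open Stmt8Aux

/-- Parametric LP `min dᵀy  s.t.  B y ≤ b(z)` with `b` affine in `z`, feasible
and bounded for all `z ∈ U`.  There exist finitely many regions
`U_i = {z ∈ U : W_i⁻¹ b(z) ≥ 0}` (with `W_i` invertible) covering `U`, and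
affine maps `y_i` optimal on each region; consequently there is an optimal
decision rule which on each `z` agrees with one of the affine maps (a
piecewise linear / region-wise affine rule). -/
theorem stmt8 {m ny L : ℕ}
    (B : Matrix (Fin m) (Fin ny) ℝ) (d : Fin ny → ℝ)
    (b : (Fin L → ℝ) →ᵃ[ℝ] (Fin m → ℝ))
    (U : Set (Fin L → ℝ))
    (hfeas : ∀ z ∈ U, ∃ y : Fin ny → ℝ, ∀ i, B.mulVec y i ≤ b z i)
    (hbdd : ∀ z ∈ U, ∃ lb : ℝ, ∀ y : Fin ny → ℝ,
      (∀ i, B.mulVec y i ≤ b z i) → lb ≤ d ⬝ᵥ y) :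
    ∃ (β : ℕ) (W : Fin β → Matrix (Fin m) (Fin m) ℝ)
      (y : Fin β → ((Fin L → ℝ) →ᵃ[ℝ] (Fin ny → ℝ))),
      (∀ i, IsUnit (W i).det) ∧
      -- the regions cover U
      (∀ z ∈ U, ∃ i, ∀ k, 0 ≤ (W i)⁻¹.mulVec (b z) k) ∧
      -- on each region the corresponding affine map is optimal
      (∀ i, ∀ z ∈ U, (∀ k, 0 ≤ (W i)⁻¹.mulVec (b z) k) →
        (∀ k, B.mulVec (y i z) k ≤ b z k) ∧
        ∀ y' : Fin ny → ℝ, (∀ k, B.mulVec y' k ≤ b z k) → d ⬝ᵥ (y i z) ≤ d ⬝ᵥ y') ∧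
      -- the resulting piecewise linear rule is optimal for every z ∈ U
      ∃ yrule : (Fin L → ℝ) → (Fin ny → ℝ),
        ∀ z ∈ U, (∃ i, (∀ k, 0 ≤ (W i)⁻¹.mulVec (b z) k) ∧ yrule z = y i z) ∧
          (∀ k, B.mulVec (yrule z) k ≤ b z k) ∧
          ∀ y' : Fin ny → ℝ, (∀ k, B.mulVec y' k ≤ b z k) → d ⬝ᵥ (yrule z) ≤ d ⬝ᵥ y' := by
  classical
  set 𝒢 : Finset (Fin m → Jt ny m) :=
    Finset.univ.filter (fun g => GoodBasis (Amat B) (cvec d) g) with h𝒢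
  set e := 𝒢.equivFin with he
  set gsel : Fin 𝒢.card → (Fin m → Jt ny m) :=
    fun i => ((e.symm i : {x // x ∈ 𝒢}) : Fin m → Jt ny m) with hgseldef
  have hgsel : ∀ i, GoodBasis (Amat B) (cvec d) (gsel i) :=
    fun i => (Finset.mem_filter.1 (e.symm i).2).2
  set W : Fin 𝒢.card → Matrix (Fin m) (Fin m) ℝ := fun i => Wb (Amat B) (gsel i) with hW
  set ymaps : Fin 𝒢.card → ((Fin L → ℝ) →ᵃ[ℝ] (Fin ny → ℝ)) :=
    fun i => ((Matrix.mulVecLin (Mg (gsel i) * (W i)⁻¹)).toAffineMap).comp b with hymaps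
  have hyeval : ∀ i z, ymaps i z = yOf (basicSol (Amat B) (gsel i) (b z)) := by
    intro i z
    show (Matrix.mulVecLin (Mg (gsel i) * (W i)⁻¹)) (b z) = _
    rw [Matrix.mulVecLin_apply, ← Matrix.mulVec_mulVec, basicSol, yOf_expand]
  -- region optimality, in the form needed
  have hregion : ∀ i, ∀ z : Fin L → ℝ, (∀ k, 0 ≤ (W i)⁻¹.mulVec (b z) k) →
      (∀ k, B.mulVec (ymaps i z) k ≤ b z k) ∧
      ∀ y' : Fin ny → ℝ, (∀ k, B.mulVec y' k ≤ b z k) →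
        d ⬝ᵥ (ymaps i z) ≤ d ⬝ᵥ y' := by
    intro i z hfz
    have h := region_opt B d (hgsel i) (v := b z) hfz
    rw [hyeval i z]
    exact h
  -- covering
  have hcover : ∀ z ∈ U, ∃ i, ∀ k, 0 ≤ (W i)⁻¹.mulVec (b z) k := by
    intro z hz
    obtain ⟨lb, hlb⟩ := hbdd z hz
    have hrec := hrec_Amat B d hlb (hfeas z hz)
    obtain ⟨y₀, hy₀⟩ := hfeas z hz
    have hfe : ∃ x, IsFeas (Amat B) (b z) x := ⟨_, isFeas_xOf B hy₀⟩
    obtain ⟨g, hgood, hfeasg⟩ := exists_good_basis (Amat B) (cvec d) (hspan_Amat B)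
      hrec (hslack_Amat B) hfe
    have hmem : g ∈ 𝒢 := Finset.mem_filter.2 ⟨Finset.mem_univ _, hgood⟩
    refine ⟨e ⟨g, hmem⟩, ?_⟩
    have hsel : gsel (e ⟨g, hmem⟩) = g := by
      show ((e.symm (e ⟨g, hmem⟩) : {x // x ∈ 𝒢}) : Fin m → Jt ny m) = g
      rw [Equiv.symm_apply_apply]
    intro k
    have hWg : W (e ⟨g, hmem⟩) = Wb (Amat B) g := by
      show Wb (Amat B) (gsel (e ⟨g, hmem⟩)) = Wb (Amat B) g
      rw [hsel]
    rw [hWg]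
    exact hfeasg k
  refine ⟨𝒢.card, W, ymaps, fun i => isUnit_iff_ne_zero.2 (hgsel i).1, hcover,
    fun i z _ hfz => hregion i z hfz, ?_⟩
  -- the piecewise rule
  refine ⟨fun z => if h : ∃ i, ∀ k, 0 ≤ (W i)⁻¹.mulVec (b z) k
    then ymaps h.choose z else 0, ?_⟩
  intro z hz
  have hex : ∃ i, ∀ k, 0 ≤ (W i)⁻¹.mulVec (b z) k := hcover z hz
  have hsel : (if h : ∃ i, ∀ k, 0 ≤ (W i)⁻¹.mulVec (b z) k
      then ymaps h.choose z else 0) = ymaps hex.choose z := dif_pos hex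
  beta_reduce
  rw [hsel]
  have hspec := hex.choose_spec
  have hro := hregion hex.choose z hspec
  exact ⟨⟨hex.choose, hspec, rfl⟩, hro.1, hro.2⟩
end

section
/- A univariate function that is the pointwise maximum of finitely many affine functions of a single variable y_k, minimized over a closed interval [l, u] defined by finitely many affine lower and upper bounds, attains its minimum either at an endpoint of the interval or at an intersection point of two of the affine pieces; in all cases, the minimizer, viewed as a function of the parameters (the coefficients entering the affine pieces and bounds affinely), can be chosen piecewise linear in those parameters. -/
/-- A real-valued function of a parameter is piecewise linear if it is a
pointwise selection from finitely many affine functions. -/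
def IsPWL {V : Type*} [AddCommGroup V] [Module ℝ V] (g : V → ℝ) : Prop :=
  ∃ (N : ℕ) (A : Fin N → (V →ᵃ[ℝ] ℝ)), ∀ p, ∃ i, g p = A i p

private lemma fin_ciSup_eq_max' {N : ℕ} (hN : 0 < N) (f : Fin N → ℝ) :
    ∃ i, (⨆ j, f j) = f i ∧ ∀ j, f j ≤ f i := by
  haveI : Nonempty (Fin N) := ⟨⟨0, hN⟩⟩
  obtain ⟨i, hi⟩ := Finite.exists_max f
  exact ⟨i, le_antisymm (ciSup_le hi) (le_ciSup (Set.finite_range f).bddAbove i), hi⟩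

private lemma core_min' {N : ℕ} (hN : 0 < N) (a b : Fin N → ℝ) (l u : ℝ)
    (S : Finset ℝ) (hl : l ∈ S) (hu : u ∈ S)
    (hS : ∀ s ∈ S, l ≤ s ∧ s ≤ u)
    (hcross : ∀ i j, a i ≠ a j → (b j - b i) / (a i - a j) ∈ Set.Icc l u →
        (b j - b i) / (a i - a j) ∈ S)
    (y : ℝ)
    (hmin : ∀ s ∈ S, (⨆ i, a i * y + b i) ≤ ⨆ i, a i * s + b i) :
    ∀ y' ∈ Set.Icc l u, (⨆ i, a i * y + b i) ≤ ⨆ i, a i * y' + b i := by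
  classical
  haveI : Nonempty (Fin N) := ⟨⟨0, hN⟩⟩
  intro y' hy'
  have h1 : (S.filter (· ≤ y')).Nonempty := ⟨l, Finset.mem_filter.2 ⟨hl, hy'.1⟩⟩
  have h2 : (S.filter (fun s => y' ≤ s)).Nonempty := ⟨u, Finset.mem_filter.2 ⟨hu, hy'.2⟩⟩
  set c := (S.filter (· ≤ y')).max' h1 with hc
  set d := (S.filter (fun s => y' ≤ s)).min' h2 with hd
  have hcmem := Finset.mem_filter.1 ((S.filter (· ≤ y')).max'_mem h1)
  have hdmem := Finset.mem_filter.1 ((S.filter (fun s => y' ≤ s)).min'_mem h2)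
  have hcS : c ∈ S := hcmem.1
  have hcy : c ≤ y' := hcmem.2
  have hdS : d ∈ S := hdmem.1
  have hyd : y' ≤ d := hdmem.2
  have hnogap : ∀ s ∈ S, ¬(c < s ∧ s < d) := by
    rintro s hs ⟨h3, h4⟩
    rcases le_or_gt s y' with h | h
    · exact absurd (Finset.le_max' (S.filter (· ≤ y')) s (Finset.mem_filter.2 ⟨hs, h⟩))
        (not_le.2 h3)
    · exact absurd (Finset.min'_le (S.filter (fun s => y' ≤ s)) s
        (Finset.mem_filter.2 ⟨hs, h.le⟩)) (not_le.2 h4)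
  rcases eq_or_lt_of_le (hcy.trans hyd) with hcd | hcd
  · have hyc : y' = c := le_antisymm (hcd ▸ hyd) hcy
    rw [hyc]; exact hmin c hcS
  · set m := (c + d) / 2 with hm
    have hm1 : c < m := by rw [hm]; linarith
    have hm2 : m < d := by rw [hm]; linarith
    obtain ⟨i, hFi, hdomm⟩ := fin_ciSup_eq_max' hN (fun j => a j * m + b j)
    have hdom : ∀ j, ∀ t, c ≤ t → t ≤ d → a j * t + b j ≤ a i * t + b i := by
      intro j t htc htd
      by_contra hlt
      push_neg at hlt
      by_cases hij : a i = a j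
      · nlinarith [hdomm j]
      · set r := (b j - b i) / (a i - a j) with hr
        have hne : a i - a j ≠ 0 := sub_ne_zero.2 hij
        have hid : ∀ s : ℝ, (a i * s + b i) - (a j * s + b j) = (a i - a j) * (s - r) := by
          intro s; rw [hr]; field_simp; ring
        have hδm : 0 ≤ (a i - a j) * (m - r) := by rw [← hid]; linarith [hdomm j]
        have hδt : (a i - a j) * (t - r) < 0 := by rw [← hid]; linarith
        have hrIoo : c < r ∧ r < d := by
          rcases lt_trichotomy (a i - a j) 0 with hs | hs | hs
          · have h5 : m ≤ r := by nlinarith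
            have h6 : r < t := by nlinarith
            exact ⟨lt_of_lt_of_le hm1 h5, lt_of_lt_of_le h6 htd⟩
          · exact absurd hs hne
          · have h5 : r ≤ m := by nlinarith
            have h6 : t < r := by nlinarith
            exact ⟨lt_of_le_of_lt htc h6, lt_of_le_of_lt h5 hm2⟩
        have hrS : r ∈ S := hcross i j hij
          ⟨(hS c hcS).1.trans hrIoo.1.le, hrIoo.2.le.trans (hS d hdS).2⟩
        exact hnogap r hrS hrIoo
    have hbdd : ∀ t : ℝ, BddAbove (Set.range fun j => a j * t + b j) :=
      fun t => (Set.finite_range _).bddAbove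
    have hFat : ∀ t, c ≤ t → t ≤ d → (⨆ j, a j * t + b j) = a i * t + b i := by
      intro t ht1 ht2
      exact le_antisymm (ciSup_le fun j => hdom j t ht1 ht2) (le_ciSup (hbdd t) i)
    have hFc := hFat c le_rfl hcd.le
    have hFd := hFat d hcd.le le_rfl
    have hFy' := hFat y' hcy hyd
    rcases le_or_gt 0 (a i) with h | h
    · calc (⨆ j, a j * y + b j) ≤ ⨆ j, a j * c + b j := hmin c hcS
        _ = a i * c + b i := hFc
        _ ≤ a i * y' + b i := by nlinarith
        _ = ⨆ j, a j * y' + b j := hFy'.symm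
    · calc (⨆ j, a j * y + b j) ≤ ⨆ j, a j * d + b j := hmin d hdS
        _ = a i * d + b i := hFd
        _ ≤ a i * y' + b i := by nlinarith
        _ = ⨆ j, a j * y' + b j := hFy'.symm

/-- the affine map giving the crossing point of pieces `i` and `j`
(dummy `lf` if slopes equal) -/
noncomputable def crossPt' {V : Type*} [AddCommGroup V] [Module ℝ V]
    {N : ℕ} (a : Fin N → ℝ) (bf : Fin N → (V →ᵃ[ℝ] ℝ))
    (lf : V →ᵃ[ℝ] ℝ) (i j : Fin N) : V →ᵃ[ℝ] ℝ :=
  if a i = a j then lf else (a i - a j)⁻¹ • (bf j - bf i)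

private lemma crossPt'_apply {V : Type*} [AddCommGroup V] [Module ℝ V]
    {N : ℕ} (a : Fin N → ℝ) (bf : Fin N → (V →ᵃ[ℝ] ℝ))
    (lf : V →ᵃ[ℝ] ℝ) (i j : Fin N) (hij : a i ≠ a j) (p : V) :
    crossPt' a bf lf i j p = (bf j p - bf i p) / (a i - a j) := by
  rw [crossPt', if_neg hij]
  simp [div_eq_inv_mul]

/-- The pointwise maximum of finitely many affine functions of a single
variable, minimized over a closed interval `[l, u]`, attains its minimum at an
endpoint or at an intersection of two pieces with distinct slopes; moreover,
when the intercepts of the pieces and the bounds depend affinely on a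
parameter `p`, the minimizer can be chosen piecewise linear in `p`. -/
theorem stmt9 {V : Type*} [AddCommGroup V] [Module ℝ V]
    (N : ℕ) (hN : 0 < N) (a : Fin N → ℝ)
    (bf : Fin N → (V →ᵃ[ℝ] ℝ)) (lf uf : V →ᵃ[ℝ] ℝ) :
    (∀ p : V, lf p ≤ uf p →
      ∃ y ∈ Set.Icc (lf p) (uf p),
        (∀ y' ∈ Set.Icc (lf p) (uf p),
          (⨆ i, a i * y + bf i p) ≤ (⨆ i, a i * y' + bf i p)) ∧
        (y = lf p ∨ y = uf p ∨
          ∃ i j, a i ≠ a j ∧ a i * y + bf i p = a j * y + bf j p)) ∧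
    ∃ g : V → ℝ, IsPWL g ∧ ∀ p : V, lf p ≤ uf p →
      g p ∈ Set.Icc (lf p) (uf p) ∧
      ∀ y' ∈ Set.Icc (lf p) (uf p),
        (⨆ i, a i * g p + bf i p) ≤ (⨆ i, a i * y' + bf i p) := by
  classical
  -- the candidate set
  set cands : V → Finset ℝ := fun p =>
    insert (lf p) (insert (uf p)
      (Finset.image (fun ij : Fin N × Fin N => crossPt' a bf lf ij.1 ij.2 p) Finset.univ))
    with hcands
  set S : V → Finset ℝ := fun p =>
    (cands p).filter (fun x => x ∈ Set.Icc (lf p) (uf p)) with hSdef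
  have hlS : ∀ p, lf p ≤ uf p → lf p ∈ S p := fun p h =>
    Finset.mem_filter.2 ⟨Finset.mem_insert_self _ _, le_refl _, h⟩
  have huS : ∀ p, lf p ≤ uf p → uf p ∈ S p := fun p h =>
    Finset.mem_filter.2 ⟨Finset.mem_insert_of_mem (Finset.mem_insert_self _ _), h, le_refl _⟩
  have hSsub : ∀ p, ∀ s ∈ S p, lf p ≤ s ∧ s ≤ uf p := by
    intro p s hs
    exact (Finset.mem_filter.1 hs).2
  have hScross : ∀ p, ∀ i j, a i ≠ a j →
      (bf j p - bf i p) / (a i - a j) ∈ Set.Icc (lf p) (uf p) →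
      (bf j p - bf i p) / (a i - a j) ∈ S p := by
    intro p i j hij hmem
    refine Finset.mem_filter.2 ⟨?_, hmem⟩
    refine Finset.mem_insert_of_mem (Finset.mem_insert_of_mem ?_)
    refine Finset.mem_image.2 ⟨(i, j), Finset.mem_univ _, ?_⟩
    exact crossPt'_apply a bf lf i j hij p
  -- existence of a minimizing candidate
  have hminex : ∀ p, lf p ≤ uf p → ∃ y ∈ S p,
      ∀ s ∈ S p, (⨆ i, a i * y + bf i p) ≤ ⨆ i, a i * s + bf i p := by
    intro p h
    exact Finset.exists_min_image (S p) (fun t => ⨆ i, a i * t + bf i p) ⟨lf p, hlS p h⟩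
  -- the optimality over the whole interval
  have hopt : ∀ p, lf p ≤ uf p → ∀ y, (∀ s ∈ S p,
      (⨆ i, a i * y + bf i p) ≤ ⨆ i, a i * s + bf i p) →
      ∀ y' ∈ Set.Icc (lf p) (uf p),
        (⨆ i, a i * y + bf i p) ≤ ⨆ i, a i * y' + bf i p := by
    intro p h y hmin
    exact core_min' hN a (fun i => bf i p) (lf p) (uf p) (S p)
      (hlS p h) (huS p h) (hSsub p) (hScross p) y hmin
  -- candidates are endpoints or crossing points
  have hcandcase : ∀ p, ∀ y ∈ S p, y = lf p ∨ y = uf p ∨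
      ∃ i j, a i ≠ a j ∧ a i * y + bf i p = a j * y + bf j p := by
    intro p y hy
    have hy' := (Finset.mem_filter.1 hy).1
    rcases Finset.mem_insert.1 hy' with h | h
    · exact Or.inl h
    rcases Finset.mem_insert.1 h with h | h
    · exact Or.inr (Or.inl h)
    obtain ⟨⟨i, j⟩, -, hij⟩ := Finset.mem_image.1 h
    by_cases haij : a i = a j
    · rw [crossPt', if_pos haij] at hij
      exact Or.inl hij.symm
    · refine Or.inr (Or.inr ⟨i, j, haij, ?_⟩)
      rw [crossPt'_apply a bf lf i j haij p] at hij
      have hne : a i - a j ≠ 0 := sub_ne_zero.2 haij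
      have : (a i - a j) * y = bf j p - bf i p := by
        rw [← hij]; field_simp
      linarith
  constructor
  · intro p hp
    obtain ⟨y, hyS, hymin⟩ := hminex p hp
    exact ⟨y, Set.mem_Icc.2 (hSsub p y hyS), hopt p hp y hymin, hcandcase p y hyS⟩
  · -- piecewise linear selection
    set g : V → ℝ := fun p =>
      if h : lf p ≤ uf p then (hminex p h).choose else lf p with hg
    have hgspec : ∀ p, (h : lf p ≤ uf p) → g p ∈ S p ∧
        ∀ s ∈ S p, (⨆ i, a i * g p + bf i p) ≤ ⨆ i, a i * s + bf i p := by
      intro p h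
      have h1 := (hminex p h).choose_spec
      have h2 : g p = (hminex p h).choose := by rw [hg]; exact dif_pos h
      rw [h2]
      exact ⟨h1.1, h1.2⟩
    refine ⟨g, ?_, ?_⟩
    · -- IsPWL
      refine ⟨2 + N * N, ?_, ?_⟩
      · exact fun k => Sum.elim (![lf, uf])
          (fun ij : Fin N × Fin N => crossPt' a bf lf ij.1 ij.2)
          (((Equiv.sumCongr (Equiv.refl (Fin 2)) finProdFinEquiv).trans
            finSumFinEquiv).symm k)
      · intro p
        set e := (Equiv.sumCongr (Equiv.refl (Fin 2)) finProdFinEquiv).trans finSumFinEquiv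
          with he
        have key : ∀ s : Fin 2 ⊕ (Fin N × Fin N),
            Sum.elim (![lf, uf]) (fun ij : Fin N × Fin N => crossPt' a bf lf ij.1 ij.2)
              (e.symm (e s)) =
            Sum.elim (![lf, uf]) (fun ij : Fin N × Fin N => crossPt' a bf lf ij.1 ij.2) s := by
          intro s; rw [Equiv.symm_apply_apply]
        by_cases h : lf p ≤ uf p
        · have hgS := (hgspec p h).1
          have hgc := (Finset.mem_filter.1 hgS).1
          rcases Finset.mem_insert.1 hgc with hcase | hcase
          · exact ⟨e (Sum.inl 0),
              by simp only [Equiv.symm_apply_apply, Sum.elim_inl, Matrix.cons_val_zero]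
                 exact hcase⟩
          rcases Finset.mem_insert.1 hcase with hcase | hcase
          · exact ⟨e (Sum.inl 1),
              by simp only [Equiv.symm_apply_apply, Sum.elim_inl, Matrix.cons_val_one,
                   Matrix.head_cons]
                 exact hcase⟩
          obtain ⟨ij, -, hij⟩ := Finset.mem_image.1 hcase
          exact ⟨e (Sum.inr ij),
            by simp only [Equiv.symm_apply_apply, Sum.elim_inr]
               exact hij.symm⟩
        · have : g p = lf p := by rw [hg]; exact dif_neg h
          exact ⟨e (Sum.inl 0),
            by simp only [Equiv.symm_apply_apply, Sum.elim_inl, Matrix.cons_val_zero]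
               exact this⟩
    · intro p hp
      obtain ⟨hgS, hgmin⟩ := hgspec p hp
      exact ⟨Set.mem_Icc.2 (hSsub p (g p) hgS), hopt p hp (g p) hgmin⟩
end

section
/- Let x̃ be adaptively robust feasible for the two-stage robust LP P with objective c(z)ᵀx + dᵀy(z), and let ỹ(·) be a decision rule such that (x̃, ỹ(·)) is adaptively robustly optimal. Consider the optimization problem Q: max over (z, y) of dᵀỹ(z) − dᵀy subject to z ∈ U and A(z)x̃ + B y ≤ r(z). If the optimal value of Q is zero, then ỹ(·) is a Pareto-dominant (PARO) extension of x̃, i.e., there is no other adaptively robustly optimal pair (x̃, ȳ(·)) with c(z)ᵀx̃ + dᵀȳ(z) ≤ c(z)ᵀx̃ + dᵀỹ(z) for all z ∈ U and strict inequality for some z ∈ U. -/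
open Matrix

section

variable {nx ny m L : ℕ}

/-- Feasibility of `(x, y(·))` for the two-stage robust LP. -/
def TwoStageFeasible (A : (Fin L → ℝ) → Matrix (Fin m) (Fin nx) ℝ)
    (B : Matrix (Fin m) (Fin ny) ℝ) (r : (Fin L → ℝ) → (Fin m → ℝ))
    (U : Set (Fin L → ℝ)) (x : Fin nx → ℝ) (y : (Fin L → ℝ) → (Fin ny → ℝ)) : Prop :=
  ∀ z ∈ U, ∀ i, (A z).mulVec x i + B.mulVec (y z) i ≤ r z i

/-- Scenario-wise objective `c(z)ᵀx + dᵀy(z)`. -/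
def TwoStageObj (c : (Fin L → ℝ) → (Fin nx → ℝ)) (d : Fin ny → ℝ)
    (x : Fin nx → ℝ) (y : (Fin L → ℝ) → (Fin ny → ℝ)) (z : Fin L → ℝ) : ℝ :=
  c z ⬝ᵥ x + d ⬝ᵥ y z

/-- `(x, y(·))` is adaptively robustly optimal. -/
def IsARO (c : (Fin L → ℝ) → (Fin nx → ℝ)) (d : Fin ny → ℝ)
    (A : (Fin L → ℝ) → Matrix (Fin m) (Fin nx) ℝ) (B : Matrix (Fin m) (Fin ny) ℝ)
    (r : (Fin L → ℝ) → (Fin m → ℝ)) (U : Set (Fin L → ℝ))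
    (x : Fin nx → ℝ) (y : (Fin L → ℝ) → (Fin ny → ℝ)) : Prop :=
  TwoStageFeasible A B r U x y ∧
    ∀ x' y', TwoStageFeasible A B r U x' y' →
      (⨆ z : U, TwoStageObj c d x y z) ≤ (⨆ z : U, TwoStageObj c d x' y' z)

/-- If `(x̃, ỹ(·))` is ARO and the auxiliary problem
`max { dᵀỹ(z) − dᵀy : z ∈ U, A(z)x̃ + By ≤ r(z) }` has optimal value zero
(i.e. all its feasible values are `≤ 0`), then `ỹ(·)` is a PARO extension of
`x̃`: no ARO rule `ȳ(·)` for `x̃` weakly improves the objective everywhere on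
`U` and strictly somewhere. -/
theorem stmt14
    (c : (Fin L → ℝ) → (Fin nx → ℝ)) (d : Fin ny → ℝ)
    (A : (Fin L → ℝ) → Matrix (Fin m) (Fin nx) ℝ) (B : Matrix (Fin m) (Fin ny) ℝ)
    (r : (Fin L → ℝ) → (Fin m → ℝ)) (U : Set (Fin L → ℝ))
    (xt : Fin nx → ℝ) (yt : (Fin L → ℝ) → (Fin ny → ℝ))
    (hARO : IsARO c d A B r U xt yt)
    (hQ : ∀ z ∈ U, ∀ y : Fin ny → ℝ,
      (∀ i, (A z).mulVec xt i + B.mulVec y i ≤ r z i) →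
        d ⬝ᵥ yt z - d ⬝ᵥ y ≤ 0) :
    ¬ ∃ ybar : (Fin L → ℝ) → (Fin ny → ℝ), IsARO c d A B r U xt ybar ∧
      (∀ z ∈ U, TwoStageObj c d xt ybar z ≤ TwoStageObj c d xt yt z) ∧
      ∃ z ∈ U, TwoStageObj c d xt ybar z < TwoStageObj c d xt yt z := by
  rintro ⟨ybar, hbARO, _, z, hz, hlt⟩
  have hfeas := hbARO.1 z hz
  have := hQ z hz (ybar z) hfeas
  simp only [TwoStageObj] at hlt
  linarith

end
end

section
/- In the setting of the previous problem Q (with x̃ adaptively robust feasible and (x̃, ỹ(·)) adaptively robustly optimal), if the optimal value v* of Q is strictly positive, attained at (z*, y*), then the modified decision rule y(z) = ỹ(z) for z ≠ z* and y(z*) = y* is feasible with x̃ and Pareto-dominates ỹ(·); hence ỹ(·) is not a PARO extension of x̃. Moreover, v* bounds the maximum possible pointwise improvement: there is no z̄ ∈ U and feasible recourse ȳ (i.e., A(z̄)x̃ + B ȳ ≤ r(z̄)) with dᵀỹ(z̄) − dᵀȳ > v*. -/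
open Matrix

section

variable {nx ny m L : ℕ}

/-- `y(·)` is a PARO extension of `x`: `(x, y(·))` is ARO and no other ARO rule
for `x` weakly improves the objective on all of `U` and strictly somewhere. -/
def IsPAROExtension (c : (Fin L → ℝ) → (Fin nx → ℝ)) (d : Fin ny → ℝ)
    (A : (Fin L → ℝ) → Matrix (Fin m) (Fin nx) ℝ) (B : Matrix (Fin m) (Fin ny) ℝ)
    (r : (Fin L → ℝ) → (Fin m → ℝ)) (U : Set (Fin L → ℝ))
    (x : Fin nx → ℝ) (y : (Fin L → ℝ) → (Fin ny → ℝ)) : Prop :=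
  IsARO c d A B r U x y ∧
    ¬ ∃ ybar : (Fin L → ℝ) → (Fin ny → ℝ), IsARO c d A B r U x ybar ∧
      (∀ z ∈ U, TwoStageObj c d x ybar z ≤ TwoStageObj c d x y z) ∧
      ∃ z ∈ U, TwoStageObj c d x ybar z < TwoStageObj c d x y z

/-- If the auxiliary problem `Q` has a strictly positive optimal value `v⋆`
attained at `(z⋆, y⋆)`, then the rule obtained from `ỹ(·)` by replacing its
value at `z⋆` by `y⋆` is feasible with `x̃` and Pareto-dominates `ỹ(·)`; hence
`ỹ(·)` is not a PARO extension of `x̃`.  Moreover no scenario `z̄ ∈ U` with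
feasible recourse `ȳ` improves `dᵀỹ(z̄)` by more than `v⋆`. -/
theorem stmt15
    (c : (Fin L → ℝ) → (Fin nx → ℝ)) (d : Fin ny → ℝ)
    (A : (Fin L → ℝ) → Matrix (Fin m) (Fin nx) ℝ) (B : Matrix (Fin m) (Fin ny) ℝ)
    (r : (Fin L → ℝ) → (Fin m → ℝ)) (U : Set (Fin L → ℝ))
    (xt : Fin nx → ℝ) (yt : (Fin L → ℝ) → (Fin ny → ℝ))
    (hARO : IsARO c d A B r U xt yt)
    (vstar : ℝ) (hv : 0 < vstar)
    (zstar : Fin L → ℝ) (hzstar : zstar ∈ U) (ystar : Fin ny → ℝ)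
    (hyfeas : ∀ i, (A zstar).mulVec xt i + B.mulVec ystar i ≤ r zstar i)
    (hattain : d ⬝ᵥ yt zstar - d ⬝ᵥ ystar = vstar)
    (hopt : ∀ z ∈ U, ∀ y : Fin ny → ℝ,
      (∀ i, (A z).mulVec xt i + B.mulVec y i ≤ r z i) →
        d ⬝ᵥ yt z - d ⬝ᵥ y ≤ vstar) :
    (TwoStageFeasible A B r U xt (Function.update yt zstar ystar) ∧
      (∀ z ∈ U, TwoStageObj c d xt (Function.update yt zstar ystar) z ≤
        TwoStageObj c d xt yt z) ∧
      ∃ z ∈ U, TwoStageObj c d xt (Function.update yt zstar ystar) z <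
        TwoStageObj c d xt yt z) ∧
    ¬ IsPAROExtension c d A B r U xt yt ∧
    ¬ ∃ zbar ∈ U, ∃ ybar : Fin ny → ℝ,
      (∀ i, (A zbar).mulVec xt i + B.mulVec ybar i ≤ r zbar i) ∧
      vstar < d ⬝ᵥ yt zbar - d ⬝ᵥ ybar := by
  classical
  set yu := Function.update yt zstar ystar with hyu
  have hfeas : TwoStageFeasible A B r U xt yu := by
    intro z hz i
    by_cases hzz : z = zstar
    · subst hzz
      simpa [hyu, Function.update_self] using hyfeas i
    · simpa [hyu, Function.update_of_ne hzz] using hARO.1 z hz i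
  have hdle : ∀ z ∈ U, TwoStageObj c d xt yu z ≤ TwoStageObj c d xt yt z := by
    intro z hz
    by_cases hzz : z = zstar
    · rw [hzz]
      simp only [TwoStageObj, hyu, Function.update_self]
      linarith
    · simp [TwoStageObj, hyu, Function.update_of_ne hzz]
  have hstrict : TwoStageObj c d xt yu zstar < TwoStageObj c d xt yt zstar := by
    simp only [TwoStageObj, hyu, Function.update_self]
    linarith
  have hdom : (∀ z ∈ U, TwoStageObj c d xt yu z ≤ TwoStageObj c d xt yt z) ∧
      ∃ z ∈ U, TwoStageObj c d xt yu z < TwoStageObj c d xt yt z :=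
    ⟨hdle, zstar, hzstar, hstrict⟩
  refine ⟨⟨hfeas, hdom.1, hdom.2⟩, ?_, ?_⟩
  · -- not PARO
    intro hP
    apply hP.2
    refine ⟨yu, ⟨hfeas, ?_⟩, hdom.1, hdom.2⟩
    intro x' y' hf'
    have hle : (⨆ z : U, TwoStageObj c d xt yu z) ≤ ⨆ z : U, TwoStageObj c d xt yt z := by
      haveI : Nonempty U := ⟨⟨zstar, hzstar⟩⟩
      by_cases hb : BddAbove (Set.range fun z : U => TwoStageObj c d xt yt z)
      · exact ciSup_mono hb (fun z => hdle z z.2)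
      · have hbu : ¬ BddAbove (Set.range fun z : U => TwoStageObj c d xt yu z) := by
          intro hbu
          apply hb
          obtain ⟨M, hM⟩ := hbu
          refine ⟨max M (TwoStageObj c d xt yt zstar), ?_⟩
          rintro _ ⟨z, rfl⟩
          dsimp only
          by_cases hzz : (z : Fin L → ℝ) = zstar
          · exact le_max_of_le_right (by rw [hzz])
          · refine le_max_of_le_left ?_
            have : TwoStageObj c d xt yt z = TwoStageObj c d xt yu z := by
              simp [TwoStageObj, hyu, Function.update_of_ne hzz]
            rw [this]
            exact hM ⟨z, rfl⟩
        rw [Real.iSup_of_not_bddAbove hb, Real.iSup_of_not_bddAbove hbu]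
    exact hle.trans (hARO.2 x' y' hf')
  · rintro ⟨zbar, hzbar, ybar, hfb, hgt⟩
    exact absurd (hopt zbar hzbar ybar hfb) (not_le.mpr hgt)

end
end
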